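/- Let x* minimize ½‖y − A x‖² + λ J(x) with J the SLOPE norm (weights w_1 > 0, w_1 ≥ ... ≥ w_n ≥ 0, λ > 0), and set u* = y − A x*. If x*_ℓ ≠ 0 for some ℓ, then there exists q₀ ∈ {1,...,n} such that |aₗᵀ u*| + Σ_{k=1}^{q₀−1} |A_{∖ℓ}ᵀ u*|_{[k]} = λ Σ_{k=1}^{q₀} w_k. -/

import Mathlib

open Finset Matrix

/-- `kth v k` is the `(k+1)`-th largest entry of `v` (zero-indexed: `kth v 0` is the largest). -/
noncomputable def kth {n : ℕ} (v : Fin n → ℝ) (k : ℕ) : ℝ :=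
  if h : k < n then v (Tuple.sort (fun i => -v i) ⟨k, h⟩) else 0

/-- `absKth v k` is the `(k+1)`-th largest absolute entry of `v` (zero-indexed). -/
noncomputable def absKth {n : ℕ} (v : Fin n → ℝ) (k : ℕ) : ℝ :=
  kth (fun i => |v i|) k

/-- The SLOPE (sorted-ℓ1) function with weights `w 0 ≥ w 1 ≥ …` (zero-indexed). -/
noncomputable def slopeNorm {n : ℕ} (w : ℕ → ℝ) (x : Fin n → ℝ) : ℝ :=
  ∑ k ∈ Finset.range n, w k * absKth x k

/-- Dual norm of a norm `J` on `ℝ^n`. -/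
noncomputable def dualNorm {n : ℕ} (J : (Fin n → ℝ) → ℝ) (g : Fin n → ℝ) : ℝ :=
  sSup {t : ℝ | ∃ x : Fin n → ℝ, J x ≤ 1 ∧ t = ∑ i, g i * x i}

/-- `dropIdx ℓ v` is the vector `v` deprived of its `ℓ`-th entry. -/
def dropIdx {n : ℕ} (ℓ : Fin n) (v : Fin n → ℝ) : Fin (n - 1) → ℝ :=
  fun j => if h : (j : ℕ) < (ℓ : ℕ) then v ⟨j, lt_trans h ℓ.isLt⟩
           else v ⟨(j : ℕ) + 1, by have := j.isLt; omega⟩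

open Finset

lemma absKth_apply {n : ℕ} (v : Fin n → ℝ) {k : ℕ} (h : k < n) :
    absKth v k = |v (Tuple.sort (fun i => -|v i|) ⟨k, h⟩)| := by
  simp [absKth, kth, dif_pos h]

lemma absKth_zero_of_le {n : ℕ} (v : Fin n → ℝ) {k : ℕ} (h : n ≤ k) :
    absKth v k = 0 := by
  simp [absKth, kth, dif_neg (not_lt.2 h)]

lemma absKth_nonneg {n : ℕ} (v : Fin n → ℝ) (k : ℕ) : 0 ≤ absKth v k := by
  by_cases h : k < n
  · rw [absKth_apply v h]; positivity
  · rw [absKth_zero_of_le v (not_lt.1 h)]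

lemma absKth_anti {n : ℕ} (v : Fin n → ℝ) {i j : ℕ} (hij : i ≤ j) :
    absKth v j ≤ absKth v i := by
  by_cases hj : j < n
  · have hi : i < n := lt_of_le_of_lt hij hj
    rw [absKth_apply v hi, absKth_apply v hj]
    have := Tuple.monotone_sort (fun i => -|v i|) (a := ⟨i, hi⟩) (b := ⟨j, hj⟩)
      (by simpa using hij)
    simp only [Function.comp] at this
    linarith [this]
  · rw [absKth_zero_of_le v (not_lt.1 hj)]; exact absKth_nonneg v i

lemma mybyparts (f g : ℕ → ℝ) (n : ℕ) :
    ∑ k ∈ range n, f k * g k =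
      (∑ i ∈ range n, (f i - f (i+1)) * (∑ k ∈ range (i+1), g k)) +
        f n * (∑ k ∈ range n, g k) := by
  induction n with
  | zero => simp
  | succ n ih =>
    rw [sum_range_succ, ih, sum_range_succ (fun i => (f i - f (i+1)) * _)]
    rw [sum_range_succ g n]
    ring

lemma sum_finset_le {n : ℕ} (A : ℕ → ℝ) (hA : ∀ i j : ℕ, i ≤ j → A j ≤ A i)
    (T : Finset (Fin n)) : ∑ k ∈ T, A (k : ℕ) ≤ ∑ j ∈ range T.card, A j := by
  induction T using Finset.strongInduction with
  | _ T ih =>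
    rcases T.eq_empty_or_nonempty with rfl | hT
    · simp
    · set M := T.max' hT with hM
      have hMT : M ∈ T := T.max'_mem hT
      have hcard : T.card ≤ (M : ℕ) + 1 := by
        have hsub : T.image Fin.val ⊆ range ((M : ℕ) + 1) := by
          intro x hx
          obtain ⟨k, hk, rfl⟩ := mem_image.1 hx
          exact mem_range.2 (Nat.lt_succ_of_le (T.le_max' k hk))
        have := card_le_card hsub
        rwa [card_image_of_injective _ Fin.val_injective, card_range] at this
      have herase := ih (T.erase M) (erase_ssubset hMT)
      have hce : (T.erase M).card = T.card - 1 := card_erase_of_mem hMT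
      have hpos : 1 ≤ T.card := card_pos.2 hT
      calc ∑ k ∈ T, A (k : ℕ)
          = ∑ k ∈ T.erase M, A (k : ℕ) + A (M : ℕ) := by
            rw [sum_erase_add _ _ hMT]
        _ ≤ ∑ j ∈ range (T.card - 1), A j + A (T.card - 1) := by
            gcongr
            · rw [hce] at herase; exact herase
            · exact hA _ _ (by omega)
        _ = ∑ j ∈ range T.card, A j := by
            conv_rhs => rw [show T.card = (T.card - 1) + 1 by omega, sum_range_succ]

noncomputable def topSum {n : ℕ} (v : Fin n → ℝ) (p : ℕ) : ℝ :=
  ∑ k ∈ range p, absKth v k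

lemma topSum_nonneg {n : ℕ} (v : Fin n → ℝ) (p : ℕ) : 0 ≤ topSum v p :=
  Finset.sum_nonneg fun k _ => absKth_nonneg v k

lemma topSum_mono {n : ℕ} (v : Fin n → ℝ) {p q : ℕ} (h : p ≤ q) :
    topSum v p ≤ topSum v q := by
  unfold topSum
  exact Finset.sum_le_sum_of_subset_of_nonneg (by simpa using h)
    (fun k _ _ => absKth_nonneg v k)

lemma filter_perm_card {n p : ℕ} (hp : p ≤ n) (σ : Equiv.Perm (Fin n)) :
    ((univ : Finset (Fin n)).filter fun i => ((σ⁻¹ i : Fin n) : ℕ) < p).card = p := by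
  have h1 : ((univ : Finset (Fin n)).filter fun i => ((σ⁻¹ i : Fin n) : ℕ) < p) =
      Finset.image σ ((univ : Finset (Fin n)).filter fun k => (k : ℕ) < p) := by
    ext i
    simp only [mem_filter, mem_univ, true_and, mem_image]
    constructor
    · intro h; exact ⟨σ⁻¹ i, h, by simp⟩
    · rintro ⟨k, hk, rfl⟩; simpa using hk
  rw [h1, Finset.card_image_of_injective _ σ.injective]
  have h2 : Finset.image Fin.val ((univ : Finset (Fin n)).filter fun k : Fin n => (k : ℕ) < p)
      = range p := by
    ext x
    simp only [mem_image, mem_filter, mem_univ, true_and, mem_range]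
    constructor
    · rintro ⟨k, hk, rfl⟩; exact hk
    · intro hx; exact ⟨⟨x, lt_of_lt_of_le hx hp⟩, hx, rfl⟩
  have := congrArg Finset.card h2
  rwa [Finset.card_image_of_injective _ Fin.val_injective, card_range] at this

lemma filter_perm_sum {n p : ℕ} (hp : p ≤ n) (σ : Equiv.Perm (Fin n)) (F : Fin n → ℝ) :
    ∑ i ∈ (univ : Finset (Fin n)).filter (fun i => ((σ⁻¹ i : Fin n) : ℕ) < p), F i
      = ∑ k ∈ range p, (if h : k < n then F (σ ⟨k, h⟩) else 0) := by
  rw [Finset.sum_filter]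
  rw [← Equiv.sum_comp σ (fun i => if ((σ⁻¹ i : Fin n) : ℕ) < p then F i else 0)]
  simp only [Equiv.symm_apply_apply, Equiv.Perm.coe_inv]
  have h1 : ∀ x : Fin n, (if (x : ℕ) < p then F (σ x) else 0)
      = (fun k : ℕ => if h : k < n then (if k < p then F (σ ⟨k, h⟩) else 0) else 0) (x : ℕ) := by
    intro x; simp [x.isLt]
  rw [Finset.sum_congr rfl (fun x _ => h1 x), Fin.sum_univ_eq_sum_range (fun k : ℕ => if h : k < n then (if k < p then F (σ ⟨k, h⟩) else 0) else 0) n]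
  rw [← Finset.sum_subset (Finset.range_subset_range.2 hp)
    (by intro k _ hk
        have hkp : ¬ k < p := by simpa using hk
        simp [hkp])]
  refine Finset.sum_congr rfl fun k hk => ?_
  have hkp := mem_range.1 hk
  simp [lt_of_lt_of_le hkp hp, hkp]

lemma topSum_eq_filter {n p : ℕ} (hp : p ≤ n) (v : Fin n → ℝ) :
    topSum v p = ∑ i ∈ (univ : Finset (Fin n)).filter
      (fun i => (((Tuple.sort (fun i => -|v i|))⁻¹ i : Fin n) : ℕ) < p), |v i| := by
  rw [filter_perm_sum hp _ (fun i => |v i|)]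
  unfold topSum
  refine Finset.sum_congr rfl fun k hk => ?_
  have hkn : k < n := lt_of_lt_of_le (mem_range.1 hk) hp
  rw [dif_pos hkn, absKth_apply v hkn]

lemma sum_abs_le_topSum {n : ℕ} (v : Fin n → ℝ) (T : Finset (Fin n)) :
    ∑ i ∈ T, |v i| ≤ topSum v T.card := by
  set σ : Equiv.Perm (Fin n) := Tuple.sort (fun i => -|v i|) with hσ
  have h1 : ∑ i ∈ T, |v i| = ∑ k ∈ T.image (fun i => σ.symm i), absKth v (k : ℕ) := by
    rw [Finset.sum_image (fun a _ b _ h => σ.symm.injective h)]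
    refine Finset.sum_congr rfl fun i _ => ?_
    rw [absKth_apply v (Fin.is_lt _)]
    congr 1
    simp [hσ]
  rw [h1]
  have h2 := sum_finset_le (absKth v) (fun i j hij => absKth_anti v hij)
    (T.image (fun i => σ.symm i))
  rwa [Finset.card_image_of_injective _ σ.symm.injective] at h2


lemma topSum_exists_set {n p : ℕ} (hp : p ≤ n) (v : Fin n → ℝ) :
    ∃ S : Finset (Fin n), S.card = p ∧ topSum v p = ∑ i ∈ S, |v i| :=
  ⟨_, filter_perm_card hp _, topSum_eq_filter hp v⟩

lemma topSum_add_le {n p : ℕ} (hp : p ≤ n) (x z : Fin n → ℝ) :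
    topSum (x + z) p ≤ topSum x p + topSum z p := by
  obtain ⟨S, hcard, hS⟩ := topSum_exists_set hp (x + z)
  rw [hS]
  calc ∑ i ∈ S, |(x + z) i| ≤ ∑ i ∈ S, (|x i| + |z i|) :=
        Finset.sum_le_sum fun i _ => abs_add_le _ _
    _ = ∑ i ∈ S, |x i| + ∑ i ∈ S, |z i| := Finset.sum_add_distrib
    _ ≤ topSum x p + topSum z p := by
        have h1 := sum_abs_le_topSum x S
        have h2 := sum_abs_le_topSum z S
        rw [hcard] at h1 h2
        linarith

lemma topSum_smul {n p : ℕ} (hp : p ≤ n) (c : ℝ) (hc : 0 ≤ c) (x : Fin n → ℝ) :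
    topSum (c • x) p = c * topSum x p := by
  refine le_antisymm ?_ ?_
  · obtain ⟨S, hcard, hS⟩ := topSum_exists_set hp (c • x)
    rw [hS]
    have : ∑ i ∈ S, |(c • x) i| = c * ∑ i ∈ S, |x i| := by
      rw [Finset.mul_sum]
      refine Finset.sum_congr rfl fun i _ => ?_
      simp [abs_mul, abs_of_nonneg hc]
    rw [this]
    have h1 := sum_abs_le_topSum x S
    rw [hcard] at h1
    exact mul_le_mul_of_nonneg_left h1 hc
  · obtain ⟨S, hcard, hS⟩ := topSum_exists_set hp x
    rw [hS]
    have : c * ∑ i ∈ S, |x i| = ∑ i ∈ S, |(c • x) i| := by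
      rw [Finset.mul_sum]
      refine Finset.sum_congr rfl fun i _ => ?_
      simp [abs_mul, abs_of_nonneg hc]
    rw [this]
    have h1 := sum_abs_le_topSum (c • x) S
    rwa [hcard] at h1

/-- extended weights, zero beyond `n` -/
def wext (w : ℕ → ℝ) (n : ℕ) : ℕ → ℝ := fun k => if k < n then w k else 0

lemma slope_rep {n : ℕ} (w : ℕ → ℝ) (x : Fin n → ℝ) :
    slopeNorm w x = ∑ i ∈ range n, (wext w n i - wext w n (i+1)) * topSum x (i+1) := by
  have h := mybyparts (wext w n) (absKth x) n
  have h2 : ∑ k ∈ range n, wext w n k * absKth x k = slopeNorm w x := by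
    refine Finset.sum_congr rfl fun k hk => ?_
    rw [wext, if_pos (mem_range.1 hk)]
  rw [h2] at h
  rw [h]
  simp [wext, topSum]

lemma wcoef_nonneg {n : ℕ} (w : ℕ → ℝ)
    (hwa : ∀ i j : ℕ, i ≤ j → j < n → w j ≤ w i) (hwn : 0 ≤ w (n - 1)) (hn : 0 < n) :
    ∀ i, 0 ≤ wext w n i - wext w n (i+1) := by
  intro i
  have hnn : ∀ k, k < n → 0 ≤ w k := fun k hk =>
    le_trans hwn (hwa k (n-1) (by omega) (by omega))
  unfold wext
  by_cases h1 : i + 1 < n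
  · rw [if_pos (by omega), if_pos h1]
    have := hwa i (i+1) (by omega) h1
    linarith
  · rw [if_neg h1]
    by_cases h2 : i < n
    · rw [if_pos h2]; simpa using hnn i h2
    · rw [if_neg h2]; simp

lemma slope_add_le {n : ℕ} (w : ℕ → ℝ)
    (hwa : ∀ i j : ℕ, i ≤ j → j < n → w j ≤ w i) (hwn : 0 ≤ w (n - 1)) (hn : 0 < n)
    (x z : Fin n → ℝ) : slopeNorm w (x + z) ≤ slopeNorm w x + slopeNorm w z := by
  rw [slope_rep, slope_rep, slope_rep, ← Finset.sum_add_distrib]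
  refine Finset.sum_le_sum fun i hi => ?_
  rw [← mul_add]
  exact mul_le_mul_of_nonneg_left
    (topSum_add_le (by have := mem_range.1 hi; omega) x z) (wcoef_nonneg w hwa hwn hn i)

lemma slope_smul {n : ℕ} (w : ℕ → ℝ) (c : ℝ) (hc : 0 ≤ c) (x : Fin n → ℝ) :
    slopeNorm w (c • x) = c * slopeNorm w x := by
  rw [slope_rep, slope_rep, Finset.mul_sum]
  refine Finset.sum_congr rfl fun i hi => ?_
  rw [topSum_smul (by have := mem_range.1 hi; omega) c hc x]
  ring

lemma topSum_total {n : ℕ} (v : Fin n → ℝ) : topSum v n = ∑ i, |v i| := by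
  rw [topSum_eq_filter (le_refl n) v]
  refine Finset.sum_congr ?_ fun _ _ => rfl
  refine Finset.filter_true_of_mem fun i _ => Fin.is_lt _


def emb {n : ℕ} (ℓ : Fin n) : Fin (n - 1) → Fin n :=
  fun j => if h : (j : ℕ) < (ℓ : ℕ) then ⟨j, lt_trans h ℓ.isLt⟩
           else ⟨(j : ℕ) + 1, by have := j.isLt; omega⟩

lemma dropIdx_eq_emb {n : ℕ} (ℓ : Fin n) (v : Fin n → ℝ) (j : Fin (n-1)) :
    dropIdx ℓ v j = v (emb ℓ j) := by
  unfold dropIdx emb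
  split <;> rfl

lemma emb_injective {n : ℕ} (ℓ : Fin n) : Function.Injective (emb ℓ) := by
  intro a b h
  unfold emb at h
  have := congrArg Fin.val h
  apply Fin.ext
  split at this <;> split at this <;> simp only at this <;> omega

lemma emb_ne {n : ℕ} (ℓ : Fin n) (j : Fin (n-1)) : emb ℓ j ≠ ℓ := by
  unfold emb
  intro h
  have := congrArg Fin.val h
  split at this <;> simp only at this <;> omega

lemma emb_surj {n : ℕ} (ℓ : Fin n) (i : Fin n) (h : i ≠ ℓ) : ∃ j, emb ℓ j = i := by
  rcases lt_or_gt_of_ne (fun hv => h (Fin.ext hv) : (i:ℕ) ≠ (ℓ:ℕ)) with hlt | hgt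
  · have hi : (i : ℕ) < n - 1 := by have := ℓ.isLt; omega
    refine ⟨⟨i, hi⟩, ?_⟩
    apply Fin.ext
    unfold emb
    rw [dif_pos hlt]
  · have hi : (i : ℕ) - 1 < n - 1 := by have := i.isLt; omega
    refine ⟨⟨(i:ℕ) - 1, hi⟩, ?_⟩
    apply Fin.ext
    unfold emb
    rw [dif_neg (by simp only; omega)]
    simp only
    omega

lemma sum_avoid_le_topSum_drop {n : ℕ} (ℓ : Fin n) (G : Fin n → ℝ)
    (S : Finset (Fin n)) (hS : ℓ ∉ S) :
    ∑ i ∈ S, |G i| ≤ topSum (dropIdx ℓ G) S.card := by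
  set S₀ : Finset (Fin (n-1)) := univ.filter (fun j => emb ℓ j ∈ S) with hS₀
  have himg : S₀.image (emb ℓ) = S := by
    ext i
    simp only [hS₀, mem_image, mem_filter, mem_univ, true_and]
    constructor
    · rintro ⟨j, hj, rfl⟩; exact hj
    · intro hi
      obtain ⟨j, rfl⟩ := emb_surj ℓ i (fun hiℓ => hS (hiℓ ▸ hi))
      exact ⟨j, hi, rfl⟩
  have hsum : ∑ i ∈ S, |G i| = ∑ j ∈ S₀, |dropIdx ℓ G j| := by
    rw [← himg, Finset.sum_image (fun a _ b _ h => emb_injective ℓ h)]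
    exact Finset.sum_congr rfl fun j _ => by rw [dropIdx_eq_emb]
  have hcard : S₀.card = S.card := by
    rw [← himg, Finset.card_image_of_injective _ (emb_injective ℓ)]
  rw [hsum, ← hcard]
  exact sum_abs_le_topSum (dropIdx ℓ G) S₀

lemma topSum_drop_exists {n : ℕ} (ℓ : Fin n) (G : Fin n → ℝ) {p : ℕ} (hp : p ≤ n - 1) :
    ∃ S : Finset (Fin n), S.card = p ∧ ℓ ∉ S ∧
      topSum (dropIdx ℓ G) p = ∑ i ∈ S, |G i| := by
  obtain ⟨S', hcard, hsum⟩ := topSum_exists_set hp (dropIdx ℓ G)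
  refine ⟨S'.image (emb ℓ), ?_, ?_, ?_⟩
  · rw [Finset.card_image_of_injective _ (emb_injective ℓ), hcard]
  · intro hmem
    obtain ⟨j, _, hj⟩ := mem_image.1 hmem
    exact emb_ne ℓ j hj
  · rw [hsum, Finset.sum_image (fun a _ b _ h => emb_injective ℓ h)]
    exact Finset.sum_congr rfl fun j _ => by rw [dropIdx_eq_emb]

lemma key_ineq {m n : ℕ} (hn : 0 < n)
    (A : Matrix (Fin m) (Fin n) ℝ) (y : Fin m → ℝ)
    (w : ℕ → ℝ)
    (hwa : ∀ i j : ℕ, i ≤ j → j < n → w j ≤ w i) (hwn : 0 ≤ w (n - 1))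
    (lam : ℝ) (hlam : 0 < lam)
    (xstar : Fin n → ℝ)
    (hmin : ∀ x : Fin n → ℝ,
        (1 / 2) * ∑ i, (y i - (A *ᵥ xstar) i) ^ 2 + lam * slopeNorm w xstar ≤
        (1 / 2) * ∑ i, (y i - (A *ᵥ x) i) ^ 2 + lam * slopeNorm w x)
    (d : Fin n → ℝ) :
    ∑ i, (y - A *ᵥ xstar) i * (A *ᵥ d) i ≤
      lam * (slopeNorm w (xstar + d) - slopeNorm w xstar) := by
  set u : Fin m → ℝ := y - A *ᵥ xstar with hu
  set E : ℝ := ∑ i, (A *ᵥ d) i ^ 2 with hE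
  have hE0 : 0 ≤ E := Finset.sum_nonneg fun i _ => sq_nonneg _
  have hstep : ∀ t : ℝ, 0 < t → t ≤ 1 →
      ∑ i, u i * (A *ᵥ d) i ≤
        lam * (slopeNorm w (xstar + d) - slopeNorm w xstar) + t * E := by
    intro t ht ht1
    have h1 := hmin (xstar + t • d)
    have hAd : A *ᵥ (xstar + t • d) = A *ᵥ xstar + t • (A *ᵥ d) := by
      rw [Matrix.mulVec_add, Matrix.mulVec_smul]
    have hquad : ∑ i, (y i - (A *ᵥ (xstar + t • d)) i) ^ 2 =
        ∑ i, (y i - (A *ᵥ xstar) i) ^ 2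
          - 2 * t * ∑ i, u i * (A *ᵥ d) i + t ^ 2 * E := by
      rw [hAd, hE, Finset.mul_sum, Finset.mul_sum, ← Finset.sum_sub_distrib,
        ← Finset.sum_add_distrib]
      refine Finset.sum_congr rfl fun i _ => ?_
      simp only [Pi.add_apply, Pi.smul_apply, smul_eq_mul, hu, Pi.sub_apply]
      ring
    have hconv : slopeNorm w (xstar + t • d) ≤
        (1 - t) * slopeNorm w xstar + t * slopeNorm w (xstar + d) := by
      have hxe : xstar + t • d = (1 - t) • xstar + t • (xstar + d) := by
        funext i
        simp only [Pi.add_apply, Pi.smul_apply, smul_eq_mul]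
        ring
      rw [hxe]
      calc slopeNorm w ((1 - t) • xstar + t • (xstar + d))
          ≤ slopeNorm w ((1 - t) • xstar) + slopeNorm w (t • (xstar + d)) :=
            slope_add_le w hwa hwn hn _ _
        _ = (1 - t) * slopeNorm w xstar + t * slopeNorm w (xstar + d) := by
            rw [slope_smul w _ (by linarith) _, slope_smul w _ (by linarith) _]
    rw [hquad] at h1
    nlinarith [h1, sq_nonneg t, mul_pos ht ht]
  refine le_of_forall_pos_le_add ?_
  intro ε hε
  rcases le_or_gt E 0 with hE1 | hE1
  · have := hstep 1 one_pos le_rfl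
    have hEeq : E = 0 := le_antisymm hE1 hE0
    rw [hEeq] at this
    linarith
  · set t : ℝ := min 1 (ε / E) with htdef
    have ht0 : 0 < t := lt_min one_pos (div_pos hε hE1)
    have ht1 : t ≤ 1 := min_le_left _ _
    have := hstep t ht0 ht1
    have htE : t * E ≤ ε := by
      calc t * E ≤ (ε / E) * E := by
            apply mul_le_mul_of_nonneg_right (min_le_right _ _) hE0
        _ = ε := div_mul_cancel₀ ε (ne_of_gt hE1)
    linarith

theorem nonzero_implies_equality {m n : ℕ} (hn : 0 < n)
    (A : Matrix (Fin m) (Fin n) ℝ) (y : Fin m → ℝ)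
    (w : ℕ → ℝ) (hw0 : 0 < w 0)
    (hwa : ∀ i j : ℕ, i ≤ j → j < n → w j ≤ w i) (hwn : 0 ≤ w (n - 1))
    (lam : ℝ) (hlam : 0 < lam)
    (xstar : Fin n → ℝ)
    (hmin : ∀ x : Fin n → ℝ,
        (1 / 2) * ∑ i, (y i - (A *ᵥ xstar) i) ^ 2 + lam * slopeNorm w xstar ≤
        (1 / 2) * ∑ i, (y i - (A *ᵥ x) i) ^ 2 + lam * slopeNorm w x)
    (ustar : Fin m → ℝ) (hu : ustar = y - A *ᵥ xstar)
    (ℓ : Fin n) (hx : xstar ℓ ≠ 0) :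
    ∃ q < n, |∑ i, A i ℓ * ustar i| +
      ∑ k ∈ Finset.range q, absKth (dropIdx ℓ (fun j => ∑ i, A i j * ustar i)) k =
      lam * ∑ k ∈ Finset.range (q + 1), w k := by
  classical
  set G : Fin n → ℝ := fun j => ∑ i, A i j * ustar i with hG
  -- the subgradient inequality
  have key : ∀ d : Fin n → ℝ, ∑ j, G j * d j ≤
      lam * (slopeNorm w (xstar + d) - slopeNorm w xstar) := by
    intro d
    have h := key_ineq hn A y w hwa hwn lam hlam xstar hmin d
    rw [← hu] at h
    have hswap : ∑ i, ustar i * (A *ᵥ d) i = ∑ j, G j * d j := by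
      simp only [hG, Matrix.mulVec, dotProduct, Finset.mul_sum, Finset.sum_mul]
      rw [Finset.sum_comm]
      exact Finset.sum_congr rfl fun j _ => Finset.sum_congr rfl fun i _ => by ring
    rwa [hswap] at h
  have slope0 : slopeNorm w (0 : Fin n → ℝ) = 0 := by
    have h0 : (0 : Fin n → ℝ) = (0:ℝ) • (0 : Fin n → ℝ) := by simp
    rw [h0, slope_smul w 0 le_rfl]; ring
  -- the equality ⟨G, x*⟩ = λ J(x*)
  have F2 : lam * slopeNorm w xstar ≤ ∑ j, G j * xstar j := by
    have h2 := key (-xstar)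
    have e2 : xstar + (-xstar) = 0 := by funext i; simp
    rw [e2, slope0] at h2
    have e3 : ∑ j, G j * (-xstar) j = -∑ j, G j * xstar j := by
      rw [← Finset.sum_neg_distrib]
      exact Finset.sum_congr rfl fun j _ => by simp [Pi.neg_apply, mul_neg]
    rw [e3] at h2
    linarith
  -- the family of inequalities topSum G p ≤ λ Σ_{k<p} w k
  have F3 : ∀ p, p ≤ n → topSum G p ≤ lam * ∑ k ∈ range p, w k := by
    intro p hp
    obtain ⟨Sp, hcard, hSp⟩ := topSum_exists_set hp G
    set d : Fin n → ℝ := fun i => if i ∈ Sp then (if G i < 0 then -1 else 1) else 0 with hd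
    have hGd : ∀ j, G j * d j = if j ∈ Sp then |G j| else 0 := by
      intro j; rw [hd]; by_cases hj : j ∈ Sp
      · simp only [if_pos hj]
        by_cases hneg : G j < 0
        · rw [if_pos hneg, abs_of_neg hneg]; ring
        · rw [if_neg hneg, abs_of_nonneg (not_lt.1 hneg)]; ring
      · simp only [if_neg hj, mul_zero]
    have hlhs : ∑ j, G j * d j = topSum G p := by
      rw [hSp, Finset.sum_congr rfl (fun j _ => hGd j), Finset.sum_ite_mem,
        Finset.univ_inter]
    have habs : ∀ j, |d j| = if j ∈ Sp then 1 else 0 := by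
      intro j; rw [hd]
      by_cases hj : j ∈ Sp
      · simp only [if_pos hj]
        by_cases hneg : G j < 0 <;> simp [hneg]
      · simp [if_neg hj]
    have hsupp : ∑ j, |d j| = (p : ℝ) := by
      rw [Finset.sum_congr rfl (fun j _ => habs j), Finset.sum_ite_mem,
        Finset.univ_inter, Finset.sum_const, hcard]
      simp
    have hk1 : ∀ k, absKth d k ≤ 1 := by
      intro k; by_cases hkn : k < n
      · rw [absKth_apply d hkn]
        rw [habs]
        split <;> norm_num
      · rw [absKth_zero_of_le d (not_lt.1 hkn)]; norm_num
    have hk0 : ∀ k, p ≤ k → absKth d k = 0 := by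
      intro k hpk
      by_cases hkn : k < n
      · by_contra hne
        have hpos : 0 < absKth d k :=
          lt_of_le_of_ne (absKth_nonneg d k) (Ne.symm hne)
        have hone : ∀ j ∈ range (k+1), absKth d j = (1:ℝ) := by
          intro j hj
          have hjk : j ≤ k := by have := mem_range.1 hj; omega
          have hjn : j < n := lt_of_le_of_lt hjk hkn
          by_cases hmem : (Tuple.sort fun i => -|d i|) ⟨j, hjn⟩ ∈ Sp
          · rw [absKth_apply d hjn, habs, if_pos hmem]
          · exfalso
            have h1 : 0 < absKth d j := lt_of_lt_of_le hpos (absKth_anti d hjk)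
            rw [absKth_apply d hjn, habs, if_neg hmem] at h1
            exact lt_irrefl 0 h1
        have htop : topSum d (k+1) = (k+1 : ℝ) := by
          unfold topSum
          rw [Finset.sum_congr rfl hone, Finset.sum_const, card_range]
          simp
        have hle : topSum d (k+1) ≤ topSum d n := topSum_mono d (by omega)
        rw [topSum_total, hsupp, htop] at hle
        have : (k:ℝ) + 1 ≤ (p:ℝ) := by push_cast at hle ⊢; linarith
        have : k + 1 ≤ p := by exact_mod_cast this
        omega
      · exact absKth_zero_of_le d (not_lt.1 hkn)
    have hJd : slopeNorm w d ≤ ∑ k ∈ range p, w k := by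
      unfold slopeNorm
      have hterm : ∀ k ∈ range n, w k * absKth d k ≤ (if k < p then w k else 0) := by
        intro k hk
        have hkn := mem_range.1 hk
        have hw0' : 0 ≤ w k := le_trans hwn (hwa k (n-1) (by omega) (by omega))
        by_cases hkp : k < p
        · rw [if_pos hkp]
          calc w k * absKth d k ≤ w k * 1 :=
                mul_le_mul_of_nonneg_left (hk1 k) hw0'
            _ = w k := mul_one _
        · rw [if_neg hkp, hk0 k (not_lt.1 hkp), mul_zero]
      calc ∑ k ∈ range n, w k * absKth d k ≤ ∑ k ∈ range n, (if k < p then w k else 0) :=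
            Finset.sum_le_sum hterm
        _ = ∑ k ∈ range p, w k := by
            rw [← Finset.sum_subset (Finset.range_subset_range.2 hp)
              (by intro k _ hk
                  have : ¬ k < p := by simpa using hk
                  simp [this])]
            refine Finset.sum_congr rfl fun k hk => ?_
            rw [if_pos (mem_range.1 hk)]
    have hJ : slopeNorm w (xstar + d) - slopeNorm w xstar ≤ slopeNorm w d := by
      have := slope_add_le w hwa hwn hn xstar d; linarith
    calc topSum G p = ∑ j, G j * d j := hlhs.symm
      _ ≤ lam * (slopeNorm w (xstar + d) - slopeNorm w xstar) := key d
      _ ≤ lam * slopeNorm w d := mul_le_mul_of_nonneg_left hJ hlam.le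
      _ ≤ lam * ∑ k ∈ range p, w k := mul_le_mul_of_nonneg_left hJd hlam.le
  -- sorting permutation for |x*|
  set τ : Equiv.Perm (Fin n) := Tuple.sort (fun i => -|xstar i|) with hτ
  set b : ℕ → ℝ := absKth xstar with hb
  set cτ : ℕ → ℝ := fun k => if h : k < n then |G (τ ⟨k, h⟩)| else 0 with hcτ
  -- C q ≤ λ W q and relation to filter sets
  have hCfil : ∀ q, q ≤ n → ∑ i ∈ (univ : Finset (Fin n)).filter
      (fun i => ((τ⁻¹ i : Fin n) : ℕ) < q), |G i| = ∑ k ∈ range q, cτ k := by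
    intro q hq
    rw [filter_perm_sum hq τ (fun i => |G i|)]
  have hCle : ∀ q, q ≤ n → ∑ k ∈ range q, cτ k ≤ lam * ∑ k ∈ range q, w k := by
    intro q hq
    rw [← hCfil q hq]
    refine le_trans ?_ (F3 q hq)
    have h1 := sum_abs_le_topSum G ((univ : Finset (Fin n)).filter
      (fun i => ((τ⁻¹ i : Fin n) : ℕ) < q))
    rwa [filter_perm_card hq τ] at h1
  -- λ J(x*) ≤ ∑ b_k c_k
  have F4 : lam * slopeNorm w xstar ≤ ∑ k ∈ range n, b k * cτ k := by
    refine le_trans F2 ?_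
    have h1 : ∑ j, G j * xstar j ≤ ∑ j, |G j| * |xstar j| :=
      Finset.sum_le_sum fun j _ => by
        calc G j * xstar j ≤ |G j * xstar j| := le_abs_self _
          _ = |G j| * |xstar j| := abs_mul _ _
    refine le_trans h1 (le_of_eq ?_)
    have h2 : ∑ j, |G j| * |xstar j| = ∑ k : Fin n, |G (τ k)| * |xstar (τ k)| :=
      (Equiv.sum_comp τ (fun j => |G j| * |xstar j|)).symm
    rw [h2]
    have h3 : ∀ k : Fin n, |G (τ k)| * |xstar (τ k)|
        = (fun k : ℕ => b k * cτ k) (k : ℕ) := by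
      intro k
      simp only [hb, hcτ, dif_pos k.isLt, absKth_apply xstar k.isLt, ← hτ, Fin.eta]
      ring
    rw [Finset.sum_congr rfl (fun k _ => h3 k),
      Fin.sum_univ_eq_sum_range (fun k : ℕ => b k * cτ k) n]
  -- by parts on both sides
  have hbn : b n = 0 := absKth_zero_of_le xstar le_rfl
  have hb1 := mybyparts b (fun k => lam * w k) n
  have hb2 := mybyparts b cτ n
  rw [hbn] at hb1 hb2
  have hlhs1 : ∑ k ∈ range n, b k * (lam * w k) = lam * slopeNorm w xstar := by
    unfold slopeNorm
    rw [Finset.mul_sum]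
    exact Finset.sum_congr rfl fun k _ => by ring
  rw [hlhs1] at hb1
  -- the forcing sum
  have hforce : 0 ≤ ∑ i ∈ range n, (b i - b (i+1)) *
      ((∑ k ∈ range (i+1), cτ k) - lam * ∑ k ∈ range (i+1), w k) := by
    have e1 : ∑ i ∈ range n, (b i - b (i+1)) *
        ((∑ k ∈ range (i+1), cτ k) - lam * ∑ k ∈ range (i+1), w k)
        = (∑ i ∈ range n, (b i - b (i+1)) * (∑ k ∈ range (i+1), cτ k))
          - ∑ i ∈ range n, (b i - b (i+1)) * (lam * ∑ k ∈ range (i+1), w k) := by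
      rw [← Finset.sum_sub_distrib]
      exact Finset.sum_congr rfl fun i _ => by ring
    have e2 : ∑ i ∈ range n, (b i - b (i+1)) * (lam * ∑ k ∈ range (i+1), w k)
        = ∑ i ∈ range n, (b i - b (i+1)) * (∑ k ∈ range (i+1), lam * w k) := by
      refine Finset.sum_congr rfl fun i _ => ?_
      rw [Finset.mul_sum]
    have hcomb : lam * slopeNorm w xstar ≤
        (∑ i ∈ range n, (b i - b (i+1)) * (∑ k ∈ range (i+1), cτ k)) + 0 * ∑ k ∈ range n, cτ k := by
      rw [← hb2]; exact F4
    rw [e1, e2]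
    simp only [zero_mul, add_zero] at hcomb
    linarith [hb1, hcomb]
  have hterm_nonpos : ∀ i ∈ range n, (b i - b (i+1)) *
      ((∑ k ∈ range (i+1), cτ k) - lam * ∑ k ∈ range (i+1), w k) ≤ 0 := by
    intro i hi
    have hin := mem_range.1 hi
    have hcoef : 0 ≤ b i - b (i+1) := by
      have := absKth_anti xstar (Nat.le_succ i)
      rw [hb]; linarith
    have hfac : (∑ k ∈ range (i+1), cτ k) - lam * ∑ k ∈ range (i+1), w k ≤ 0 := by
      have := hCle (i+1) (by omega)
      linarith
    exact mul_nonpos_of_nonneg_of_nonpos hcoef hfac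
  have hall0 : ∀ i ∈ range n, (b i - b (i+1)) *
      ((∑ k ∈ range (i+1), cτ k) - lam * ∑ k ∈ range (i+1), w k) = 0 := by
    have hsum0 : ∑ i ∈ range n, (b i - b (i+1)) *
        ((∑ k ∈ range (i+1), cτ k) - lam * ∑ k ∈ range (i+1), w k) = 0 :=
      le_antisymm (Finset.sum_nonpos hterm_nonpos) hforce
    exact (Finset.sum_eq_zero_iff_of_nonpos hterm_nonpos).1 hsum0
  -- the index p₀
  set β : ℝ := |xstar ℓ| with hβ
  have hβ0 : 0 < β := abs_pos.2 hx
  set P : ℕ → Prop := fun p => β ≤ b p with hP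
  set j0 : ℕ := ((τ.symm ℓ : Fin n) : ℕ) with hj0
  have hj0n : j0 < n := (τ.symm ℓ).isLt
  have hbj0 : b j0 = β := by
    rw [hb, absKth_apply xstar hj0n, hβ, ← hτ]
    have h5 : (⟨j0, hj0n⟩ : Fin n) = τ.symm ℓ := Fin.ext rfl
    rw [h5, Equiv.apply_symm_apply]
  have hPj0 : P j0 := by rw [hP]; simp only; rw [hbj0]
  have hj0n1 : j0 ≤ n - 1 := by omega
  set p₀ : ℕ := Nat.findGreatest P (n-1) with hp₀
  have hp₀n1 : p₀ ≤ n - 1 := Nat.findGreatest_le _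
  have hp₀n : p₀ < n := by omega
  have hPp₀ : β ≤ b p₀ := Nat.findGreatest_spec hj0n1 hPj0
  have hj0p₀ : j0 ≤ p₀ := Nat.le_findGreatest hj0n1 hPj0
  have hnot : b (p₀ + 1) < β := by
    by_cases hc : p₀ + 1 ≤ n - 1
    · have := Nat.findGreatest_is_greatest (Nat.lt_succ_self p₀) hc
      rw [hP] at this
      simpa using not_le.1 this
    · have : n ≤ p₀ + 1 := by omega
      rw [hb, absKth_zero_of_le xstar this]
      exact hβ0
  have hcoefpos : 0 < b p₀ - b (p₀ + 1) := by linarith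
  -- equality at p₀
  have heqp₀ : ∑ k ∈ range (p₀+1), cτ k = lam * ∑ k ∈ range (p₀+1), w k := by
    have h0 := hall0 p₀ (mem_range.2 hp₀n)
    rcases mul_eq_zero.1 h0 with h | h
    · exact absurd h (by linarith)
    · linarith [h]
  -- the maximizing set X
  set X : Finset (Fin n) := (univ : Finset (Fin n)).filter
      (fun i => ((τ⁻¹ i : Fin n) : ℕ) < p₀ + 1) with hX
  have hXcard : X.card = p₀ + 1 := filter_perm_card (by omega) τ
  have hXsum : ∑ i ∈ X, |G i| = ∑ k ∈ range (p₀+1), cτ k := hCfil (p₀+1) (by omega)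
  have hℓX : ℓ ∈ X := by
    rw [hX, mem_filter]
    refine ⟨mem_univ ℓ, ?_⟩
    have : ((τ⁻¹ ℓ : Fin n) : ℕ) = j0 := by rw [hj0]; rfl
    omega
  have htopeq : topSum G (p₀ + 1) = lam * ∑ k ∈ range (p₀+1), w k := by
    refine le_antisymm (F3 (p₀+1) (by omega)) ?_
    rw [← heqp₀, ← hXsum]
    have h1 := sum_abs_le_topSum G X
    rwa [hXcard] at h1
  have hXtop : ∑ i ∈ X, |G i| = topSum G (p₀ + 1) := by
    rw [hXsum, heqp₀, htopeq]
  -- conclusion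
  refine ⟨p₀, hp₀n, ?_⟩
  have hGl : ∑ i, A i ℓ * ustar i = G ℓ := by rw [hG]
  rw [hGl]
  have hdrop : ∑ k ∈ Finset.range p₀, absKth (dropIdx ℓ G) k
      = topSum (dropIdx ℓ G) p₀ := rfl
  rw [hdrop]
  have hmain : |G ℓ| + topSum (dropIdx ℓ G) p₀ = topSum G (p₀ + 1) := by
    refine le_antisymm ?_ ?_
    · obtain ⟨S, hScard, hSnl, hSsum⟩ := topSum_drop_exists ℓ G (p := p₀) (by omega)
      rw [hSsum]
      have h1 : |G ℓ| + ∑ i ∈ S, |G i| = ∑ i ∈ insert ℓ S, |G i| :=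
        (Finset.sum_insert (f := fun i => |G i|) hSnl).symm
      rw [h1]
      have h2 := sum_abs_le_topSum G (insert ℓ S)
      rwa [Finset.card_insert_of_notMem hSnl, hScard] at h2
    · rw [← hXtop]
      have h1 : ∑ i ∈ X, |G i| = |G ℓ| + ∑ i ∈ X.erase ℓ, |G i| :=
        (Finset.add_sum_erase X (fun i => |G i|) hℓX).symm
      rw [h1]
      have h2 : ∑ i ∈ X.erase ℓ, |G i| ≤ topSum (dropIdx ℓ G) p₀ := by
        have h3 := sum_avoid_le_topSum_drop ℓ G (X.erase ℓ) (Finset.notMem_erase ℓ X)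
        rwa [Finset.card_erase_of_mem hℓX, hXcard] at h3
      linarith
  rw [hmain, htopeq]
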